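/- arXiv:2205.00017 — 2 statements merged into one kernel-verified Lean document; each statement's English description precedes it below -/
import Mathlib

section
/- The 3×3 density matrix σ = (1/12)·[[4+√2, x₋, 2x₊],[x₋, 4-2√2, x₋],[2x₊, x₋, 4+√2]] with x₊ = (√2+1)/2 and x₋ = (√2-1)/2 is a valid density matrix (positive semidefinite, trace 1), and for the Hamiltonian H = diag(0,1,2) its inverse virtual temperatures for the adjacent pairs (0,1) and (1,2) are ±log(5/2 + 3/√2): specifically β_{01} = log((4+√2)/(4-2√2)) = log(5/2 + 3/√2) and β_{12} = -log(5/2 + 3/√2). -/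
open scoped ComplexOrder

/-- The preprocessed qutrit state `σ = (1/12)[[4+√2, x₋, 2x₊],[x₋, 4-2√2, x₋],[2x₊, x₋, 4+√2]]`
with `x₊ = (√2+1)/2`, `x₋ = (√2-1)/2` is a valid density matrix, and for `H = diag(0,1,2)`
its adjacent inverse virtual temperatures are
`β₀₁ = log((4+√2)/(4-2√2)) = log(5/2 + 3/√2)` and `β₁₂ = -log(5/2 + 3/√2)`. -/
theorem preprocessed_qutrit_virtual_temperatures
    (xp xm : ℝ) (hxp : xp = (Real.sqrt 2 + 1) / 2) (hxm : xm = (Real.sqrt 2 - 1) / 2)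
    (σ : Matrix (Fin 3) (Fin 3) ℂ)
    (hσ : σ = (1 / 12 : ℂ) •
      Matrix.of ![![((4 + Real.sqrt 2 : ℝ) : ℂ), (xm : ℂ), ((2 * xp : ℝ) : ℂ)],
                  ![(xm : ℂ), ((4 - 2 * Real.sqrt 2 : ℝ) : ℂ), (xm : ℂ)],
                  ![((2 * xp : ℝ) : ℂ), (xm : ℂ), ((4 + Real.sqrt 2 : ℝ) : ℂ)]])
    (ε : Fin 3 → ℝ) (hε : ε = ![0, 1, 2]) :
    σ.PosSemidef ∧ σ.trace = 1 ∧
    Real.log ((σ 0 0).re / (σ 1 1).re) / (ε 1 - ε 0) =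
      Real.log ((4 + Real.sqrt 2) / (4 - 2 * Real.sqrt 2)) ∧
    Real.log ((σ 0 0).re / (σ 1 1).re) / (ε 1 - ε 0) =
      Real.log (5 / 2 + 3 / Real.sqrt 2) ∧
    Real.log ((σ 1 1).re / (σ 2 2).re) / (ε 2 - ε 1) =
      -Real.log (5 / 2 + 3 / Real.sqrt 2) := by
  have hs2 : Real.sqrt 2 ^ 2 = 2 := Real.sq_sqrt (by norm_num)
  have hu0 : (0:ℝ) ≤ Real.sqrt 2 := Real.sqrt_nonneg 2
  have hu1 : (1:ℝ) ≤ Real.sqrt 2 := by nlinarith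
  have hule : Real.sqrt 2 ≤ 3/2 := by nlinarith
  set u := Real.sqrt 2 with hu
  -- the positive-semidefiniteness part, via a Cholesky-type factorization σ = Lᴴ L
  have hpsd : σ.PosSemidef := by
    set a1 : ℝ := Real.sqrt (1/8) with ha1
    set a2 : ℝ := Real.sqrt ((5 + 2*u)/24) with ha2
    set a3 : ℝ := Real.sqrt ((113 - 52*u)/408) with ha3
    have h1 : a1 * a1 = 1/8 := Real.mul_self_sqrt (by norm_num)
    have h2 : a2 * a2 = (5 + 2*u)/24 := Real.mul_self_sqrt (by nlinarith)
    have h3 : a3 * a3 = (113 - 52*u)/408 := Real.mul_self_sqrt (by nlinarith)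
    set t : ℝ := (7*u - 9)/17 with ht
    set L : Matrix (Fin 3) (Fin 3) ℂ :=
      Matrix.of ![![(a1 : ℂ), 0, ((-a1 : ℝ) : ℂ)],
                  ![(a2 : ℂ), ((a2 * t : ℝ) : ℂ), (a2 : ℂ)],
                  ![0, (a3 : ℂ), 0]] with hL
    have key : σ = L.conjTranspose * L := by
      subst hσ hxm hxp
      ext i j
      fin_cases i <;> fin_cases j <;>
        · simp [hL, Matrix.mul_apply, Matrix.conjTranspose_apply, Fin.sum_univ_three,
            Complex.conj_ofReal]
          rw [show ((12:ℂ))⁻¹ = ((12⁻¹ : ℝ) : ℂ) from by norm_num]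
          norm_cast
          apply Complex.ext <;> simp
          first
            | linear_combination -h1 - h2
            | linear_combination h1 - h2
            | linear_combination (-t)*h2 - (7/204)*hs2
            | linear_combination (-(t*t))*h2 - h3 - ((98*u-7)/6936)*hs2
    rw [key]
    exact Matrix.posSemidef_conjTranspose_mul_self L
  -- diagonal entries
  have hd0 : (σ 0 0).re = (4 + u)/12 := by
    subst hσ; simp [Complex.div_re]; ring
  have hd1 : (σ 1 1).re = (4 - 2*u)/12 := by
    subst hσ; simp [Complex.div_re]; ring
  have hd2 : (σ 2 2).re = (4 + u)/12 := by
    subst hσ; simp [Complex.div_re]; ring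
  have h4u : (0:ℝ) < 4 - 2*u := by nlinarith
  have h4u' : (0:ℝ) < 4 + u := by nlinarith
  have hratio : ((4 + u)/12) / ((4 - 2*u)/12) = (4 + u)/(4 - 2*u) := by
    field_simp
  have hval : (4 + u)/(4 - 2*u) = 5/2 + 3/u := by
    have hu0' : u ≠ 0 := by positivity
    have h4u'' : 4 - u*2 ≠ 0 := by linarith
    field_simp
    linear_combination 12 * hs2
  refine ⟨hpsd, ?_, ?_, ?_, ?_⟩
  · subst hσ hxm hxp
    rw [Matrix.trace_fin_three]
    simp only [Matrix.smul_apply, Matrix.of_apply, Matrix.cons_val', Matrix.cons_val_zero,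
      Matrix.cons_val_one, Matrix.head_cons, Matrix.empty_val', Matrix.cons_val_fin_one,
      Matrix.head_fin_const, smul_eq_mul, Matrix.cons_val_two, Matrix.tail_cons]
    rw [show ((1:ℂ)/12) = ((1/12 : ℝ) : ℂ) from by norm_num]
    norm_cast
    ring
  · rw [hd0, hd1, hε]
    norm_num [hratio]
  · rw [hd0, hd1, hε, hratio]
    norm_num [hval]
  · rw [hd1, hd2, hε]
    have : ((4 - 2*u)/12) / ((4 + u)/12) = (5/2 + 3/u)⁻¹ := by
      rw [← hval]; field_simp
    rw [this]
    norm_num [Real.log_inv]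
    simp
    norm_num
end

section
/- For a d-level system with nonconstant energies ε and strictly positive probability vector p, the effective cold inverse temperature β_c := max_{i≠j, ε_i≠ε_j} β_{ij} and hot inverse temperature β_h := min_{i≠j, ε_i≠ε_j} β_{ij} (with β_{ij} = log(p_i/p_j)/(ε_j-ε_i)) satisfy β_h ≤ β*(E) ≤ β_c whenever β*(E) is the inverse temperature of the Gibbs state with the same average energy E = ∑ p_i ε_i. Equivalently T_c ≤ T* ≤ T_h in temperature form (for positive temperatures). -/
private lemma key_gibbs {d : ℕ} (ε p : Fin d → ℝ) (hp : ∀ i, 0 < p i) (β : ℝ)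
    (hlt : ∀ i j, ε i ≠ ε j → Real.log (p i / p j) / (ε j - ε i) < β)
    (hne : ∃ i j, ε i ≠ ε j) :
    (∑ i, p i) * (∑ i, ε i * Real.exp (-β * ε i)) <
      (∑ i, p i * ε i) * (∑ i, Real.exp (-β * ε i)) := by
  set q : Fin d → ℝ := fun i => Real.exp (-β * ε i) with hq
  have hqpos : ∀ i, 0 < q i := fun i => Real.exp_pos _
  have hf : ∀ i j, ε i ≠ ε j → 0 < (p i * q j - p j * q i) * (ε i - ε j) := by
    intro i j hij
    have hb := hlt i j hij
    have hΔ : ε j - ε i ≠ 0 := sub_ne_zero.mpr (Ne.symm hij)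
    have hppos : 0 < p i / p j := div_pos (hp i) (hp j)
    have hqe : q i / q j = Real.exp (β * (ε j - ε i)) := by
      rw [hq]
      rw [← Real.exp_sub]
      congr 1
      ring
    rcases hΔ.lt_or_gt with hneg | hpos
    · -- ε j - ε i < 0
      have h1 : β * (ε j - ε i) < Real.log (p i / p j) := by
        rw [div_lt_iff_of_neg hneg] at hb; linarith
      have h2 : Real.exp (β * (ε j - ε i)) < p i / p j :=
        (Real.lt_log_iff_exp_lt hppos).mp h1
      rw [← hqe, div_lt_div_iff₀ (hqpos j) (hp j)] at h2
      have h3 : 0 < p i * q j - p j * q i := by linarith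
      have h4 : 0 < ε i - ε j := by linarith
      exact mul_pos h3 h4
    · -- 0 < ε j - ε i
      have h1 : Real.log (p i / p j) < β * (ε j - ε i) := by
        rw [div_lt_iff₀ hpos] at hb; linarith
      have h2 : p i / p j < Real.exp (β * (ε j - ε i)) :=
        (Real.log_lt_iff_lt_exp hppos).mp h1
      rw [← hqe, div_lt_div_iff₀ (hp j) (hqpos j)] at h2
      have h3 : p i * q j - p j * q i < 0 := by linarith
      have h4 : ε i - ε j < 0 := by linarith
      exact mul_pos_of_neg_of_neg h3 h4
  have hf0 : ∀ i j, 0 ≤ (p i * q j - p j * q i) * (ε i - ε j) := by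
    intro i j
    by_cases h : ε i = ε j
    · rw [h]; simp
    · exact (hf i j h).le
  obtain ⟨i0, j0, hij0⟩ := hne
  have hT : 0 < ∑ i, ∑ j, (p i * q j - p j * q i) * (ε i - ε j) := by
    apply Finset.sum_pos' (fun i _ => Finset.sum_nonneg fun j _ => hf0 i j)
    exact ⟨i0, Finset.mem_univ _,
      Finset.sum_pos' (fun j _ => hf0 i0 j) ⟨j0, Finset.mem_univ _, hf i0 j0 hij0⟩⟩
  have hid : ∑ i, ∑ j, (p i * q j - p j * q i) * (ε i - ε j)
      = 2 * ((∑ i, p i * ε i) * (∑ i, q i) - (∑ i, p i) * (∑ i, ε i * q i)) := by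
    have expand : ∀ i j : Fin d, (p i * q j - p j * q i) * (ε i - ε j)
        = (p i * ε i) * q j - p i * (ε j * q j) - p j * (ε i * q i) + (p j * ε j) * q i := by
      intro i j; ring
    have h1 := Finset.sum_mul_sum Finset.univ Finset.univ (fun i => p i * ε i) q
    have h2 := Finset.sum_mul_sum Finset.univ Finset.univ p (fun j => ε j * q j)
    have h3 : ∑ i : Fin d, ∑ j : Fin d, p j * (ε i * q i)
        = (∑ j, p j) * (∑ i, ε i * q i) := by
      rw [Finset.sum_comm, Finset.sum_mul_sum Finset.univ Finset.univ p (fun i => ε i * q i)]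
    have h4 : ∑ i : Fin d, ∑ j : Fin d, p j * ε j * q i
        = (∑ j, p j * ε j) * (∑ i, q i) := by
      rw [Finset.sum_comm, Finset.sum_mul_sum Finset.univ Finset.univ (fun j => p j * ε j) q]
    simp_rw [expand, Finset.sum_add_distrib, Finset.sum_sub_distrib]
    rw [h3, h4, ← h1, ← h2]; ring
  rw [hid] at hT
  have hfin : (∑ i, p i) * (∑ i, ε i * q i) < (∑ i, p i * ε i) * (∑ i, q i) := by
    linarith
  simpa [hq] using hfin

/-- The inverse temperature `β*` of the Gibbs state with the same average energy as `p`
lies between the hot and cold effective inverse temperatures: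
`β_h = inf {β_{ij}} ≤ β* ≤ sup {β_{ij}} = β_c`, where `β_{ij} = log(p_i/p_j)/(ε_j - ε_i)`
ranges over all pairs with `ε_i ≠ ε_j`. -/
theorem beta_star_between_virtual_temperatures
    {d : ℕ} (ε : Fin d → ℝ) (hε : ∃ i j, ε i ≠ ε j)
    (p : Fin d → ℝ) (hp : ∀ i, 0 < p i) (hpsum : ∑ i, p i = 1)
    (E : ℝ) (hEdef : E = ∑ i, p i * ε i)
    (βstar : ℝ)
    (hβstar : (∑ i, ε i * Real.exp (-βstar * ε i)) /
      (∑ i, Real.exp (-βstar * ε i)) = E)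
    (V : Set ℝ)
    (hV : V = {x | ∃ i j, i ≠ j ∧ ε i ≠ ε j ∧
      x = Real.log (p i / p j) / (ε j - ε i)}) :
    sInf V ≤ βstar ∧ βstar ≤ sSup V := by
  obtain ⟨i0, j0, hε0⟩ := hε
  have hVfin : V.Finite := by
    apply Set.Finite.subset (Set.finite_range
      (fun ij : Fin d × Fin d => Real.log (p ij.1 / p ij.2) / (ε ij.2 - ε ij.1)))
    rw [hV]
    rintro x ⟨i, j, -, -, rfl⟩
    exact ⟨(i, j), rfl⟩
  have hmemV : ∀ i j, ε i ≠ ε j → Real.log (p i / p j) / (ε j - ε i) ∈ V := by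
    intro i j hij
    have hijne : i ≠ j := fun h => hij (by rw [h])
    rw [hV]; exact ⟨i, j, hijne, hij, rfl⟩
  have hZ : 0 < ∑ i, Real.exp (-βstar * ε i) :=
    Finset.sum_pos (fun i _ => Real.exp_pos _) ⟨i0, Finset.mem_univ _⟩
  have hB : ∑ i, ε i * Real.exp (-βstar * ε i) = E * ∑ i, Real.exp (-βstar * ε i) := by
    rw [div_eq_iff hZ.ne'] at hβstar; exact hβstar
  constructor
  · by_contra hc
    push_neg at hc
    have hgt : ∀ i j, ε i ≠ ε j → βstar < Real.log (p i / p j) / (ε j - ε i) := by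
      intro i j hij
      exact lt_of_lt_of_le hc (csInf_le hVfin.bddBelow (hmemV i j hij))
    have hkey := key_gibbs (fun i => -ε i) p hp (-βstar) ?_ ⟨i0, j0, by simpa using hε0⟩
    · have e1 : ∑ x : Fin d, -ε x * Real.exp (-(-βstar) * -ε x)
          = -∑ i, ε i * Real.exp (-βstar * ε i) := by
        rw [← Finset.sum_neg_distrib]
        refine Finset.sum_congr rfl fun x _ => ?_
        rw [show -(-βstar) * -ε x = -βstar * ε x by ring]
        ring
      have e2 : ∑ x : Fin d, Real.exp (-(-βstar) * -ε x)
          = ∑ i, Real.exp (-βstar * ε i) := by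
        refine Finset.sum_congr rfl fun x _ => ?_
        rw [show -(-βstar) * -ε x = -βstar * ε x by ring]
      have e3 : ∑ x : Fin d, p x * -ε x = -∑ i, p i * ε i := by
        rw [← Finset.sum_neg_distrib]
        exact Finset.sum_congr rfl fun x _ => by ring
      rw [e1, e2, e3, hpsum, ← hEdef, hB] at hkey
      nlinarith [hkey]
    · intro i j h
      have hij : ε i ≠ ε j := fun e => h (by simp [e])
      have h1 := hgt i j hij
      have h2 : Real.log (p i / p j) / (-ε j - -ε i)
          = -(Real.log (p i / p j) / (ε j - ε i)) := by
        rw [show (-ε j - -ε i) = -(ε j - ε i) by ring, div_neg]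
      rw [h2]; linarith
  · by_contra hc
    push_neg at hc
    have hlt : ∀ i j, ε i ≠ ε j → Real.log (p i / p j) / (ε j - ε i) < βstar := by
      intro i j hij
      exact lt_of_le_of_lt (le_csSup hVfin.bddAbove (hmemV i j hij)) hc
    have hkey := key_gibbs ε p hp βstar hlt ⟨i0, j0, hε0⟩
    rw [hpsum, ← hEdef, hB] at hkey
    linarith
end
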